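/- If γ ∈ M_k ⊗ M_m is a state that is positive under partial transpose (i.e., γ ≥ 0 and γ^Γ ≥ 0, where Γ transposes the second tensor factor), and W ∈ M_k, V ∈ M_m are orthogonal projections with tr(γ(W ⊗ V^⊥)) = tr(γ(W^⊥ ⊗ V)) = 0, then γ = (W⊗V)γ(W⊗V) + (W^⊥⊗V^⊥)γ(W^⊥⊗V^⊥). -/

import Mathlib

open Matrix ComplexOrder Kronecker

/-- The partial transpose on the second tensor factor of `M_k ⊗ M_m ≅ M_{km}`. -/
def partialTranspose {k m : ℕ} (γ : Matrix (Fin k × Fin m) (Fin k × Fin m) ℂ) :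
    Matrix (Fin k × Fin m) (Fin k × Fin m) ℂ :=
  Matrix.of fun x y => γ (x.1, y.2) (y.1, x.2)

variable {k m : ℕ}


lemma pt_mul_kron (X : Matrix (Fin k × Fin m) (Fin k × Fin m) ℂ)
    (A : Matrix (Fin k) (Fin k) ℂ) (B : Matrix (Fin m) (Fin m) ℂ) :
    partialTranspose (X * (A ⊗ₖ B)) =
      (1 ⊗ₖ Bᵀ) * partialTranspose X * (A ⊗ₖ 1) := by
  ext x y
  simp only [partialTranspose, Matrix.mul_apply, Matrix.of_apply, kroneckerMap_apply,
    Fintype.sum_prod_type, Matrix.one_apply, Matrix.transpose_apply]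
  simp [Finset.sum_ite_eq, Finset.sum_ite_eq', Finset.mul_sum, Finset.sum_mul]
  apply Finset.sum_congr rfl
  intro a _
  apply Finset.sum_congr rfl
  intro b _
  ring

lemma kron_mul_pt (X : Matrix (Fin k × Fin m) (Fin k × Fin m) ℂ)
    (A : Matrix (Fin k) (Fin k) ℂ) (B : Matrix (Fin m) (Fin m) ℂ) :
    partialTranspose ((A ⊗ₖ B) * X) =
      (A ⊗ₖ 1) * partialTranspose X * (1 ⊗ₖ Bᵀ) := by
  ext x y
  simp only [partialTranspose, Matrix.mul_apply, Matrix.of_apply, kroneckerMap_apply,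
    Fintype.sum_prod_type, Matrix.one_apply, Matrix.transpose_apply]
  simp [Finset.sum_ite_eq, Finset.sum_ite_eq', Finset.mul_sum, Finset.sum_mul]
  rw [Finset.sum_comm]
  exact Finset.sum_congr rfl fun a _ => Finset.sum_congr rfl fun b _ => by ring

lemma trace_ct_self_eq_zero {n p : Type*} [Fintype n] [Fintype p] [DecidableEq p]
    (X : Matrix n p ℂ) (h : (Xᴴ * X).trace = 0) : X = 0 := by
  have h' : ∑ j, ∑ i, Complex.normSq (X i j) = 0 := by
    have h2 : ((∑ j, ∑ i, Complex.normSq (X i j) : ℝ) : ℂ) = 0 := by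
      rw [← h]
      simp only [Matrix.trace, Matrix.diag, Matrix.mul_apply, Matrix.conjTranspose_apply]
      push_cast
      refine Finset.sum_congr rfl fun j _ => Finset.sum_congr rfl fun i _ => ?_
      rw [Complex.normSq_eq_conj_mul_self]
      rfl
    exact_mod_cast h2
  ext i j
  have := (Finset.sum_eq_zero_iff_of_nonneg (fun j _ => Finset.sum_nonneg
      (fun i _ => Complex.normSq_nonneg (X i j)))).mp h' j (Finset.mem_univ j)
  have := (Finset.sum_eq_zero_iff_of_nonneg
      (fun i _ => Complex.normSq_nonneg (X i j))).mp this i (Finset.mem_univ i)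
  simpa using Complex.normSq_eq_zero.mp this

lemma psd_mul_proj_eq_zero {n : Type*} [Fintype n] [DecidableEq n] {M p : Matrix n n ℂ}
    (hM : M.PosSemidef) (hp : p.IsHermitian) (hpp : p * p = p)
    (h : (M * p).trace = 0) : M * p = 0 := by
  obtain ⟨B, rfl⟩ : ∃ B : Matrix n n ℂ, M = Bᴴ * B := by
    open scoped MatrixOrder in exact CStarAlgebra.nonneg_iff_eq_star_mul_self.mp hM.nonneg
  have key : ((B * p)ᴴ * (B * p)).trace = 0 := by
    rw [conjTranspose_mul, hp.eq]
    calc (p * Bᴴ * (B * p)).trace = ((B * p) * (p * Bᴴ)).trace := trace_mul_comm _ _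
      _ = (B * (p * p) * Bᴴ).trace := by simp only [mul_assoc]
      _ = ((B * p) * Bᴴ).trace := by rw [hpp]
      _ = (Bᴴ * (B * p)).trace := trace_mul_comm _ _
      _ = (Bᴴ * B * p).trace := by rw [mul_assoc]
      _ = 0 := h
  have hBp : B * p = 0 := trace_ct_self_eq_zero _ key
  rw [mul_assoc, hBp, mul_zero]

lemma kron_ct {A : Matrix (Fin k) (Fin k) ℂ} {B : Matrix (Fin m) (Fin m) ℂ} :
    (A ⊗ₖ B)ᴴ = Aᴴ ⊗ₖ Bᴴ := by
  ext x y
  simp [conjTranspose_apply, mul_comm]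

lemma kron_herm {A : Matrix (Fin k) (Fin k) ℂ} {B : Matrix (Fin m) (Fin m) ℂ}
    (hA : A.IsHermitian) (hB : B.IsHermitian) : (A ⊗ₖ B).IsHermitian := by
  unfold Matrix.IsHermitian
  rw [kron_ct, hA.eq, hB.eq]

lemma pt_pt (X : Matrix (Fin k × Fin m) (Fin k × Fin m) ℂ) :
    partialTranspose (partialTranspose X) = X := rfl

lemma pt_zero : partialTranspose (0 : Matrix (Fin k × Fin m) (Fin k × Fin m) ℂ) = 0 := rfl

/-- A PPT state `γ` (i.e. `γ ≥ 0` and `γ^Γ ≥ 0`) satisfying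
`tr(γ(W ⊗ V^⊥)) = tr(γ(W^⊥ ⊗ V)) = 0` for orthogonal projections `W`, `V` decomposes as
`γ = (W⊗V)γ(W⊗V) + (W^⊥⊗V^⊥)γ(W^⊥⊗V^⊥)`. -/
theorem stmt3 (k m : ℕ) (γ : Matrix (Fin k × Fin m) (Fin k × Fin m) ℂ)
    (W : Matrix (Fin k) (Fin k) ℂ) (V : Matrix (Fin m) (Fin m) ℂ)
    (hγ : γ.PosSemidef) (hγΓ : (partialTranspose γ).PosSemidef)
    (hWherm : W.IsHermitian) (hWproj : W * W = W)
    (hVherm : V.IsHermitian) (hVproj : V * V = V)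
    (h1 : (γ * (W ⊗ₖ (1 - V))).trace = 0)
    (h2 : (γ * ((1 - W) ⊗ₖ V)).trace = 0) :
    γ = (W ⊗ₖ V) * γ * (W ⊗ₖ V)
      + ((1 - W) ⊗ₖ (1 - V)) * γ * ((1 - W) ⊗ₖ (1 - V)) := by
  have hW'herm : (1 - W).IsHermitian := (isHermitian_one).sub hWherm
  have hV'herm : (1 - V).IsHermitian := (isHermitian_one).sub hVherm
  have hW'proj : (1 - W) * (1 - W) = 1 - W := by
    rw [sub_mul, one_mul, mul_sub, mul_one, hWproj]; abel
  have hV'proj : (1 - V) * (1 - V) = 1 - V := by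
    rw [sub_mul, one_mul, mul_sub, mul_one, hVproj]; abel
  have hVtherm : (Vᵀ).IsHermitian := hVherm.transpose
  have hVtproj : Vᵀ * Vᵀ = Vᵀ := by rw [← transpose_mul, hVproj]
  -- from h1, h2: γ annihilates the off-diagonal projections
  have hA1 : γ * (W ⊗ₖ (1 - V)) = 0 :=
    psd_mul_proj_eq_zero hγ (kron_herm hWherm hV'herm)
      (by rw [← mul_kronecker_mul, hWproj, hV'proj]) h1
  have hA2 : γ * ((1 - W) ⊗ₖ V) = 0 :=
    psd_mul_proj_eq_zero hγ (kron_herm hW'herm hVherm)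
      (by rw [← mul_kronecker_mul, hW'proj, hVproj]) h2
  have hA1' : (W ⊗ₖ (1 - V)) * γ = 0 := by
    have := congrArg conjTranspose hA1
    rwa [conjTranspose_mul, (kron_herm hWherm hV'herm).eq, hγ.isHermitian.eq,
      conjTranspose_zero] at this
  have hA2' : ((1 - W) ⊗ₖ V) * γ = 0 := by
    have := congrArg conjTranspose hA2
    rwa [conjTranspose_mul, (kron_herm hW'herm hVherm).eq, hγ.isHermitian.eq,
      conjTranspose_zero] at this
  set δ := partialTranspose γ with hδ
  -- the partial transpose annihilates (1-W) ⊗ Vᵀ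
  have hpt2 : (1 ⊗ₖ Vᵀ) * δ * ((1 - W) ⊗ₖ 1) = 0 := by
    rw [← pt_mul_kron, hA2, pt_zero]
  have htrδ : (δ * ((1 - W) ⊗ₖ Vᵀ)).trace = 0 := by
    have e : ((1 - W) ⊗ₖ Vᵀ) = ((1 - W) ⊗ₖ (1 : Matrix (Fin m) (Fin m) ℂ)) * (1 ⊗ₖ Vᵀ) := by
      rw [← mul_kronecker_mul, mul_one, one_mul]
    rw [e, ← mul_assoc, trace_mul_comm, ← mul_assoc, hpt2, trace_zero]
  have hδ0 : δ * ((1 - W) ⊗ₖ Vᵀ) = 0 :=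
    psd_mul_proj_eq_zero hγΓ (kron_herm hW'herm hVtherm)
      (by rw [← mul_kronecker_mul, hW'proj, hVtproj]) htrδ
  -- hence the cross term vanishes
  have hPQ : (W ⊗ₖ V) * γ * ((1 - W) ⊗ₖ (1 - V)) = 0 := by
    have e1 : partialTranspose ((W ⊗ₖ V) * γ * ((1 - W) ⊗ₖ (1 - V))) = 0 := by
      rw [mul_assoc, kron_mul_pt, pt_mul_kron]
      have e2 : (W ⊗ₖ (1 : Matrix (Fin m) (Fin m) ℂ)) *
          ((1 ⊗ₖ (1 - V)ᵀ) * δ * ((1 - W) ⊗ₖ 1)) * (1 ⊗ₖ Vᵀ) =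
          (W ⊗ₖ (1 - V)ᵀ) * (δ * ((1 - W) ⊗ₖ Vᵀ)) := by
        rw [show (W ⊗ₖ (1 - V)ᵀ) = (W ⊗ₖ (1 : Matrix (Fin m) (Fin m) ℂ)) * (1 ⊗ₖ (1 - V)ᵀ) by
            rw [← mul_kronecker_mul, mul_one, one_mul],
          show ((1 - W) ⊗ₖ Vᵀ) = ((1 - W) ⊗ₖ (1 : Matrix (Fin m) (Fin m) ℂ)) * (1 ⊗ₖ Vᵀ) by
            rw [← mul_kronecker_mul, mul_one, one_mul]]
        simp only [mul_assoc]
      rw [e2, hδ0, mul_zero]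
    have := congrArg partialTranspose e1
    rwa [pt_pt, pt_zero] at this
  have hQP : ((1 - W) ⊗ₖ (1 - V)) * γ * (W ⊗ₖ V) = 0 := by
    have := congrArg conjTranspose hPQ
    rwa [conjTranspose_mul, conjTranspose_mul, (kron_herm hWherm hVherm).eq,
      (kron_herm hW'herm hV'herm).eq, hγ.isHermitian.eq, conjTranspose_zero,
      ← mul_assoc] at this
  -- resolution of identity
  have hsum : (W ⊗ₖ V) + ((1 - W) ⊗ₖ (1 - V)) + (W ⊗ₖ (1 - V)) + ((1 - W) ⊗ₖ V)
      = (1 : Matrix (Fin k × Fin m) (Fin k × Fin m) ℂ) := by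
    rw [← one_kronecker_one (α := ℂ)]
    rw [show (1 : Matrix (Fin k) (Fin k) ℂ) = W + (1 - W) by abel,
      show (1 : Matrix (Fin m) (Fin m) ℂ) = V + (1 - V) by abel]
    rw [add_kronecker, kronecker_add, kronecker_add]
    abel
  set P := W ⊗ₖ V
  set Q := (1 - W) ⊗ₖ (1 - V)
  set R := W ⊗ₖ (1 - V)
  set S := (1 - W) ⊗ₖ V
  have hright : γ * (P + Q) = γ := by
    have : γ * (P + Q + R + S) = γ := by rw [hsum, mul_one]
    rw [mul_add, mul_add, hA1, hA2, add_zero, add_zero] at this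
    exact this
  have hleft : (P + Q) * γ = γ := by
    have : (P + Q + R + S) * γ = γ := by rw [hsum, one_mul]
    rw [add_mul, add_mul, hA1', hA2', add_zero, add_zero] at this
    exact this
  calc γ = (P + Q) * (γ * (P + Q)) := by rw [hright, hleft]
    _ = P * γ * P + P * γ * Q + (Q * γ * P + Q * γ * Q) := by
        noncomm_ring
    _ = P * γ * P + Q * γ * Q := by rw [hPQ, hQP, add_zero, zero_add]
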